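/- Fix rationals z_n with 0 < √2 − z_n < 2^{−n}, and let S ⊆ ℚ³ be the smallest closed cone (closed under addition and nonnegative rational scaling, closed in the Euclidean topology of ℚ³) containing (1,0,0) and (1/n, 1, z_n) for all n ≥ 1. Then there is no x ∈ ℚ with (0,1,x) ∈ S. -/

import Mathlib

/-- Fix rationals `z n` with `0 < √2 − z n < 2⁻ⁿ` (for `n ≥ 1`), and let `S ⊆ ℚ³` be the
smallest closed cone (closed under addition and nonnegative rational scaling, and
topologically closed in the Euclidean topology of `ℚ³`) containing `(1,0,0)` and
`(1/n, 1, z n)` for all `n ≥ 1`.  Then there is no `x ∈ ℚ` with `(0, 1, x) ∈ S`. -/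
theorem stmt_18 (z : ℕ → ℚ)
    (hz : ∀ n : ℕ, 1 ≤ n →
      0 < Real.sqrt 2 - (z n : ℝ) ∧ Real.sqrt 2 - (z n : ℝ) < (2 : ℝ) ^ (-(n : ℤ))) :
    ¬ ∃ x : ℚ, ((0 : ℚ), (1 : ℚ), x) ∈
      ⋂₀ {C : Set (ℚ × ℚ × ℚ) |
        IsClosed C ∧
        (∀ a ∈ C, ∀ b ∈ C, a + b ∈ C) ∧
        (∀ q : ℚ, 0 ≤ q → ∀ v ∈ C, q • v ∈ C) ∧
        ((1 : ℚ), (0 : ℚ), (0 : ℚ)) ∈ C ∧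
        (∀ n : ℕ, 1 ≤ n → ((1 / n : ℚ), (1 : ℚ), z n) ∈ C)} := by
  rintro ⟨x, hx⟩
  have hxne : (x : ℝ) ≠ Real.sqrt 2 := fun h => irrational_sqrt_two ⟨x, h⟩
  rcases hxne.lt_or_gt with hlt | hgt
  · -- x < √2 : use the closed half-space { v | r * v.2.1 ≤ v.2.2 + v.1 }
    obtain ⟨r, hr1, hr2⟩ := exists_rat_btwn hlt
    have hmem := hx {v : ℚ × ℚ × ℚ | r * v.2.1 ≤ v.2.2 + v.1} ?_
    · simp only [Set.mem_setOf_eq, mul_one, add_zero] at hmem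
      exact absurd hmem (not_le.mpr (by exact_mod_cast hr1))
    · refine ⟨?_, ?_, ?_, ?_, ?_⟩
      · exact isClosed_le (by fun_prop) (by fun_prop)
      · intro a ha b hb
        simp only [Set.mem_setOf_eq] at *
        push_cast [Prod.fst_add, Prod.snd_add]
        nlinarith [ha, hb]
      · intro q hq v hv
        simp only [Set.mem_setOf_eq] at *
        have : q • v = (q * v.1, q * v.2.1, q * v.2.2) := rfl
        rw [this]
        simp only
        nlinarith [hv]
      · simp
      · intro n hn
        simp only [Set.mem_setOf_eq, mul_one]
        -- need r ≤ z n + 1/n; in fact (r:ℝ) < √2 < z n + 1/n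
        have hn' : (1 : ℝ) ≤ n := by exact_mod_cast hn
        have h2n : (n : ℝ) ≤ 2 ^ n := by exact_mod_cast (Nat.lt_two_pow_self (n := n)).le
        have hnpos : (0 : ℝ) < n := by linarith
        have hpow : ((2 : ℝ) ^ (-(n : ℤ))) ≤ 1 / n := by
          rw [zpow_neg, zpow_natCast, one_div]
          exact inv_anti₀ hnpos h2n
        have h := (hz n hn).2
        have key : (r : ℝ) < (z n : ℝ) + 1 / n := by
          have : Real.sqrt 2 < (z n : ℝ) + 1 / n := by linarith
          linarith
        have : (r : ℝ) ≤ ((z n + 1 / n : ℚ) : ℝ) := by push_cast; linarith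
        exact_mod_cast this
  · -- √2 < x : use the closed half-space { v | v.2.2 ≤ r * v.2.1 }
    obtain ⟨r, hr1, hr2⟩ := exists_rat_btwn hgt
    have hmem := hx {v : ℚ × ℚ × ℚ | v.2.2 ≤ r * v.2.1} ?_
    · simp only [Set.mem_setOf_eq, mul_one] at hmem
      exact absurd hmem (not_le.mpr (by exact_mod_cast hr2))
    · refine ⟨?_, ?_, ?_, ?_, ?_⟩
      · exact isClosed_le (by fun_prop) (by fun_prop)
      · intro a ha b hb
        simp only [Set.mem_setOf_eq] at *
        push_cast [Prod.fst_add, Prod.snd_add]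
        nlinarith [ha, hb]
      · intro q hq v hv
        simp only [Set.mem_setOf_eq] at *
        have : q • v = (q * v.1, q * v.2.1, q * v.2.2) := rfl
        rw [this]
        simp only
        nlinarith [hv]
      · simp
      · intro n hn
        simp only [Set.mem_setOf_eq, mul_one]
        have h := (hz n hn).1
        have : ((z n : ℚ) : ℝ) ≤ (r : ℝ) := by linarith
        exact_mod_cast this
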